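/- arXiv:1201.5444 — 2 statements merged into one kernel-verified Lean document; each statement's English description precedes it below -/
import Mathlib

section
/- Let m ≥ 1, k ≥ 0 and d_1,…,d_k ≥ 1 be integers, and let i ≥ 1 be an integer with d_1 + ⋯ + d_k + i < m + 1. Let p = ∏_{j=1}^{k} (1 − X^{d_j}) ∈ ℚ[[X]], and let H ∈ ℚ[T] be the Hilbert polynomial of p with respect to the exponent m+1, i.e. the unique polynomial such that H(s) equals the coefficient of X^s in p·(1 − X)^{−(m+1)} for all sufficiently large natural numbers s. Then H(−i) = 0. -/
open PowerSeries

private lemma asc_prod (n m : ℕ) : (n + 1).ascFactorial m = ∏ r ∈ Finset.range m, (n + r + 1) := by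
  induction m with
  | zero => simp
  | succ k ih =>
    rw [Finset.prod_range_succ, ← ih, Nat.ascFactorial_succ]
    ring

private lemma prod_cast (n m : ℕ) :
    ∏ r ∈ Finset.range m, ((n : ℚ) + r + 1) = (m.factorial * (n + m).choose m : ℕ) := by
  rw [← Nat.ascFactorial_eq_factorial_mul_choose, asc_prod]
  push_cast
  rfl

/-- First assertion of the Lemma in section 4: let `p = ∏ⱼ (1 - X^{dⱼ}) ∈ ℚ⟦X⟧` and let
`H ∈ ℚ[T]` be the Hilbert polynomial of `p` with respect to the exponent `m + 1`, i.e. the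
(unique) polynomial with `H(s) = coeff of X^s in p·(1-X)^{-(m+1)}` for all sufficiently
large `s`.  If `i ≥ 1` and `d₁ + ⋯ + d_k + i < m + 1`, then `H(-i) = 0`. -/
theorem stmt4 (m k : ℕ) (hm : 1 ≤ m) (d : Fin k → ℕ) (hd : ∀ j, 1 ≤ d j)
    (i : ℕ) (hi : 1 ≤ i) (hsum : (∑ j, d j) + i < m + 1)
    (p : ℚ⟦X⟧) (hp : p = ∏ j : Fin k, (1 - (PowerSeries.X : ℚ⟦X⟧) ^ (d j)))
    (H : Polynomial ℚ)
    (hH : ∀ᶠ s : ℕ in Filter.atTop,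
      H.eval (s : ℚ) =
        PowerSeries.coeff s (p * ((PowerSeries.invOneSubPow ℚ (m + 1) : (ℚ⟦X⟧)ˣ) : ℚ⟦X⟧))) :
    H.eval (-(i : ℚ)) = 0 := by
  set D : ℕ := ∑ j, d j with hD
  -- p as a polynomial
  set P : Polynomial ℚ := ∏ j : Fin k, (1 - Polynomial.X ^ (d j)) with hP
  have hpP : p = (P : ℚ⟦X⟧) := by
    rw [hp, hP, ← Polynomial.coeToPowerSeries.ringHom_apply, map_prod]
    exact Finset.prod_congr rfl fun j _ => by
      simp [Polynomial.coeToPowerSeries.ringHom_apply, Polynomial.coe_sub, Polynomial.coe_pow,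
        Polynomial.coe_X, Polynomial.coe_one]
  have hdeg : P.natDegree ≤ D := by
    refine le_trans (Polynomial.natDegree_prod_le _ _) (Finset.sum_le_sum fun j _ => ?_)
    refine le_trans (Polynomial.natDegree_sub_le _ _) ?_
    simp
  have hcoeff0 : ∀ e, D < e → PowerSeries.coeff e p = 0 := by
    intro e he
    rw [hpP, Polynomial.coeff_coe]
    exact Polynomial.coeff_eq_zero_of_natDegree_lt (lt_of_le_of_lt hdeg he)
  -- the explicit polynomial
  set Q : Polynomial ℚ := Polynomial.C ((m.factorial : ℚ)⁻¹) *
    ∑ e ∈ Finset.range (D + 1), Polynomial.C (PowerSeries.coeff e p) *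
      ∏ r ∈ Finset.range m, (Polynomial.X + Polynomial.C ((r : ℚ) + 1 - e)) with hQ
  -- Step A : Q agrees with the coefficient function for s ≥ D
  have stepA : ∀ s : ℕ, D ≤ s →
      Q.eval (s : ℚ) =
        PowerSeries.coeff s (p * ((PowerSeries.invOneSubPow ℚ (m + 1) : (ℚ⟦X⟧)ˣ) : ℚ⟦X⟧)) := by
    intro s hs
    rw [PowerSeries.coeff_mul, PowerSeries.invOneSubPow_val_succ_eq_mk_add_choose,
      Finset.Nat.sum_antidiagonal_eq_sum_range_succ_mk]
    simp only [PowerSeries.coeff_mk]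
    rw [← Finset.sum_subset (Finset.range_subset_range.2 (by omega) :
        Finset.range (D + 1) ⊆ Finset.range (s + 1))
      (fun e _ he => by
        rw [hcoeff0 e (by simpa using he), zero_mul])]
    rw [hQ]
    simp only [Polynomial.eval_mul, Polynomial.eval_C, Polynomial.eval_finset_sum,
      Polynomial.eval_prod, Polynomial.eval_add, Polynomial.eval_X]
    rw [Finset.mul_sum]
    refine Finset.sum_congr rfl fun e he => ?_
    have heD : e ≤ D := by simpa [Nat.lt_succ_iff] using he
    have hes : e ≤ s := le_trans heD hs
    have key : ∏ r ∈ Finset.range m, ((s : ℚ) + ((r : ℚ) + 1 - e)) =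
        (m.factorial : ℚ) * ((m + (s - e)).choose m : ℚ) := by
      have : ∀ r : ℕ, (s : ℚ) + ((r : ℚ) + 1 - e) = ((s - e : ℕ) : ℚ) + r + 1 := by
        intro r
        have : ((s - e : ℕ) : ℚ) = (s : ℚ) - e := by
          push_cast [Nat.cast_sub hes]; ring
        rw [this]; ring
      rw [Finset.prod_congr rfl fun r _ => this r, prod_cast]
      push_cast
      rw [Nat.add_comm (s - e) m]
    rw [key]
    have hmf : (m.factorial : ℚ) ≠ 0 := Nat.cast_ne_zero.2 m.factorial_ne_zero
    field_simp
  -- Step B : H = Q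
  have hHQ : H = Q := by
    obtain ⟨N, hN⟩ := Filter.eventually_atTop.1 hH
    apply Polynomial.eq_of_infinite_eval_eq
    refine Set.infinite_of_injective_forall_mem
      (f := fun n : ℕ => ((n + max N D : ℕ) : ℚ)) ?_ ?_
    · intro a b hab
      have := Nat.cast_injective (R := ℚ) hab
      omega
    · intro n
      simp only [Set.mem_setOf_eq]
      rw [hN _ (by omega), stepA _ (by omega)]
  -- Step C : Q(-i) = 0
  rw [hHQ, hQ]
  simp only [Polynomial.eval_mul, Polynomial.eval_C, Polynomial.eval_finset_sum,
    Polynomial.eval_prod, Polynomial.eval_add, Polynomial.eval_X]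
  rw [Finset.mul_sum]
  apply Finset.sum_eq_zero
  intro e he
  have heD : e ≤ D := by simpa [Nat.lt_succ_iff] using he
  have hr : i + e - 1 ∈ Finset.range m := by
    simp only [Finset.mem_range]
    omega
  rw [Finset.prod_eq_zero hr (by
    push_cast [Nat.cast_sub (show 1 ≤ i + e by omega)]
    ring), mul_zero, mul_zero]
end

section
/- Let m ≥ 1, k ≥ 0 and d_1,…,d_k ≥ 1 be integers with d_1 + ⋯ + d_k < m + 1. Let p = ∏_{j=1}^{k} (1 − X^{d_j}) ∈ ℚ[[X]], and let H ∈ ℚ[T] be the Hilbert polynomial of p with respect to the exponent m+1, i.e. the unique polynomial such that H(s) equals the coefficient of X^s in p·(1 − X)^{−(m+1)} for all sufficiently large natural numbers s. Then H(0) = 1. -/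
open PowerSeries

private lemma prod_range_cast_fac (n m : ℕ) :
    ∏ j ∈ Finset.range m, ((n : ℚ) + j + 1) =
      (Nat.factorial (n + m)) / (Nat.factorial n) := by
  induction m with
  | zero =>
    rw [Finset.prod_range_zero, Nat.add_zero,
      div_self (by exact_mod_cast Nat.factorial_ne_zero n)]
  | succ m ih =>
    rw [Finset.prod_range_succ, ih, show n + (m + 1) = (n + m) + 1 from rfl,
      Nat.factorial_succ]
    push_cast
    ring

/-- Second assertion of the Lemma in section 4: let `p = ∏ⱼ (1 - X^{dⱼ}) ∈ ℚ⟦X⟧` and let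
`H ∈ ℚ[T]` be the Hilbert polynomial of `p` with respect to the exponent `m + 1`, i.e. the
(unique) polynomial with `H(s) = coeff of X^s in p·(1-X)^{-(m+1)}` for all sufficiently
large `s`.  If `d₁ + ⋯ + d_k < m + 1`, then `H(0) = 1`. -/
theorem stmt5 (m k : ℕ) (hm : 1 ≤ m) (d : Fin k → ℕ) (hd : ∀ j, 1 ≤ d j)
    (hsum : (∑ j, d j) < m + 1)
    (p : ℚ⟦X⟧) (hp : p = ∏ j : Fin k, (1 - (PowerSeries.X : ℚ⟦X⟧) ^ (d j)))
    (H : Polynomial ℚ)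
    (hH : ∀ᶠ s : ℕ in Filter.atTop,
      H.eval (s : ℚ) =
        PowerSeries.coeff (R := ℚ) s (p * ((PowerSeries.invOneSubPow ℚ (m + 1) : (ℚ⟦X⟧)ˣ) : ℚ⟦X⟧))) :
    H.eval 0 = 1 := by
  classical
  -- `p` is (the power series of) the polynomial `P`
  set P : Polynomial ℚ := ∏ j : Fin k, (1 - (Polynomial.X : Polynomial ℚ) ^ (d j)) with hP
  have hpP : p = (P : ℚ⟦X⟧) := by
    rw [hp, hP, ← Polynomial.coeToPowerSeries.ringHom_apply, map_prod]
    refine Finset.prod_congr rfl fun j _ => ?_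
    show 1 - PowerSeries.X ^ d j = ((1 - Polynomial.X ^ d j : Polynomial ℚ) : ℚ⟦X⟧)
    rw [Polynomial.coe_sub, Polynomial.coe_one, Polynomial.coe_pow, Polynomial.coe_X]
  -- `P` has degree at most `m`
  have hdeg : P.natDegree ≤ m := by
    calc P.natDegree ≤ ∑ j : Fin k, (1 - (Polynomial.X : Polynomial ℚ) ^ (d j)).natDegree :=
          Polynomial.natDegree_prod_le _ _
      _ ≤ ∑ j : Fin k, d j := by
          refine Finset.sum_le_sum fun j _ => ?_
          refine (Polynomial.natDegree_sub_le _ _).trans ?_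
          simp [Polynomial.natDegree_X_pow]
      _ ≤ m := by omega
  have hcoeff0 : P.coeff 0 = 1 := by
    rw [Polynomial.coeff_zero_eq_eval_zero, hP, Polynomial.eval_prod]
    refine Finset.prod_eq_one fun j _ => ?_
    have : d j ≠ 0 := by have := hd j; omega
    simp [zero_pow this]
  -- the comparison polynomial
  set F : Polynomial ℚ := ∑ i ∈ Finset.range (m + 1),
      Polynomial.C (P.coeff i / Nat.factorial m) *
        ∏ j ∈ Finset.range m,
          (Polynomial.X - Polynomial.C (i : ℚ) + Polynomial.C ((j : ℚ) + 1)) with hF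
  have hFeval : ∀ x : ℚ, F.eval x =
      ∑ i ∈ Finset.range (m + 1),
        P.coeff i / Nat.factorial m * ∏ j ∈ Finset.range m, (x - i + (j + 1)) := by
    intro x
    simp [hF, Polynomial.eval_finset_sum, Polynomial.eval_prod]
  -- key coefficient computation for `s ≥ m`
  have hkey : ∀ s : ℕ, m ≤ s →
      (PowerSeries.coeff (R := ℚ) s (p * ((PowerSeries.invOneSubPow ℚ (m + 1) : (ℚ⟦X⟧)ˣ) : ℚ⟦X⟧)))
        = F.eval (s : ℚ) := by
    intro s hs
    rw [hpP, PowerSeries.invOneSubPow_val_succ_eq_mk_add_choose, PowerSeries.coeff_mul,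
      Finset.Nat.sum_antidiagonal_eq_sum_range_succ_mk]
    have hsub : Finset.range (m + 1) ⊆ Finset.range (s + 1) := by
      intro i hi
      simp only [Finset.mem_range] at *
      omega
    rw [← Finset.sum_subset hsub (by
      intro i hi hni
      simp only [Finset.mem_range] at hi hni
      have : P.coeff i = 0 := Polynomial.coeff_eq_zero_of_natDegree_lt (by omega)
      simp [Polynomial.coeff_coe, this])]
    rw [hFeval]
    refine Finset.sum_congr rfl fun i hi => ?_
    simp only [Finset.mem_range] at hi
    have his : i ≤ s := by omega
    rw [Polynomial.coeff_coe, PowerSeries.coeff_mk]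
    have h1 : ∏ j ∈ Finset.range m, ((s : ℚ) - i + (j + 1)) =
        (Nat.factorial ((s - i) + m)) / (Nat.factorial (s - i)) := by
      rw [← prod_range_cast_fac (s - i) m]
      refine Finset.prod_congr rfl fun j _ => ?_
      rw [Nat.cast_sub his]
      ring
    have h2 : ((m + (s - i)).choose m : ℚ) =
        (Nat.factorial (m + (s - i))) / (Nat.factorial m * Nat.factorial (s - i)) := by
      rw [Nat.cast_choose ℚ (Nat.le_add_right m (s - i)), Nat.add_sub_cancel_left]
    rw [h2, h1, show (s - i) + m = m + (s - i) from by omega]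
    have hm0 : (Nat.factorial m : ℚ) ≠ 0 := by
      exact_mod_cast Nat.factorial_ne_zero m
    have hsi0 : (Nat.factorial (s - i) : ℚ) ≠ 0 := by
      exact_mod_cast Nat.factorial_ne_zero (s - i)
    field_simp
  -- `H = F` since they agree on infinitely many points
  have hHF : H = F := by
    apply Polynomial.eq_of_infinite_eval_eq
    obtain ⟨N, hN⟩ := Filter.eventually_atTop.mp hH
    have hsubset : (fun n : ℕ => (n : ℚ)) '' Set.Ici (max N m) ⊆
        { x | Polynomial.eval x H = Polynomial.eval x F } := by
      rintro x ⟨s, hs, rfl⟩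
      simp only [Set.mem_Ici, max_le_iff] at hs
      have := hN s hs.1
      rw [hkey s hs.2] at this
      exact this
    refine Set.Infinite.mono hsubset ?_
    exact Set.Infinite.image (fun a _ b _ h => Nat.cast_injective h) (Set.Ici_infinite _)
  -- evaluate `F` at `0`
  rw [hHF, hFeval]
  rw [Finset.sum_eq_single 0]
  · have : ∏ j ∈ Finset.range m, ((0 : ℚ) - (0 : ℕ) + ((j : ℚ) + 1)) =
        (Nat.factorial m : ℚ) := by
      have := prod_range_cast_fac 0 m
      simp only [Nat.cast_zero, zero_add, Nat.factorial_zero, Nat.cast_one, div_one] at this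
      rw [← this]
      refine Finset.prod_congr rfl fun j _ => by ring
    rw [this, hcoeff0]
    have hm0 : (Nat.factorial m : ℚ) ≠ 0 := by
      exact_mod_cast Nat.factorial_ne_zero m
    field_simp
  · intro i hi hi0
    have hi' : 1 ≤ i ∧ i ≤ m := by
      simp only [Finset.mem_range] at hi
      omega
    have : ∏ j ∈ Finset.range m, ((0 : ℚ) - i + ((j : ℚ) + 1)) = 0 := by
      refine Finset.prod_eq_zero (i := i - 1) (Finset.mem_range.mpr (by omega)) ?_
      have : ((i - 1 : ℕ) : ℚ) = (i : ℚ) - 1 := by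
        rw [Nat.cast_sub hi'.1]; norm_num
      rw [this]
      ring
    rw [this, mul_zero]
  · intro h
    exact absurd (Finset.mem_range.mpr (by omega)) h
end
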